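/- For every k ∈ ℕ, the generalized Laguerre polynomial satisfies the identity L_{M-1}^{(n/2)}(|x|²) e^{-|x|²} = Σ_{j=0}^{M-1} ((-1)^j/(j! 4^j)) Δ^j e^{-|x|²} for all x ∈ ℝ^n, where Δ is the Laplacian on ℝ^n. -/

import Mathlib

open Real Polynomial

/-- The generalized Laguerre polynomial
`L_k^{(γ)}(y) = ∑_{i=0}^k (-1)^i Γ(k+γ+1)/(i! (k-i)! Γ(i+γ+1)) yⁱ`. -/
noncomputable def genLaguerre (k : ℕ) (γ : ℝ) (y : ℝ) : ℝ :=
  ∑ i ∈ Finset.range (k + 1),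
    (-1) ^ i * Real.Gamma ((k : ℝ) + γ + 1) /
      ((Nat.factorial i) * (Nat.factorial (k - i)) * Real.Gamma ((i : ℝ) + γ + 1)) * y ^ i


/-- The Laplacian on `ℝⁿ`, as the sum of second derivatives along the coordinate
directions. -/
noncomputable def laplacian (n : ℕ) (f : EuclideanSpace ℝ (Fin n) → ℝ) :
    EuclideanSpace ℝ (Fin n) → ℝ :=
  fun x => ∑ i : Fin n,
    iteratedDeriv 2 (fun t : ℝ => f (x + t • EuclideanSpace.single i (1 : ℝ))) 0

noncomputable def lagP (k : ℕ) (γ : ℝ) : Polynomial ℝ :=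
  ∑ i ∈ Finset.range (k + 1),
    C ((-1 : ℝ) ^ i * Real.Gamma ((k : ℝ) + γ + 1) /
      ((Nat.factorial i) * (Nat.factorial (k - i)) * Real.Gamma ((i : ℝ) + γ + 1))) * X ^ i

lemma lagP_eval (k : ℕ) (γ y : ℝ) : (lagP k γ).eval y = genLaguerre k γ y := by
  simp [lagP, genLaguerre, eval_finset_sum]

lemma lagP_coeff (k : ℕ) (γ : ℝ) (i : ℕ) :
    (lagP k γ).coeff i = if i ≤ k then ((-1 : ℝ) ^ i * Real.Gamma ((k : ℝ) + γ + 1) /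
      ((Nat.factorial i) * (Nat.factorial (k - i)) * Real.Gamma ((i : ℝ) + γ + 1))) else 0 := by
  simp only [lagP, finset_sum_coeff, coeff_C_mul, coeff_X_pow, mul_ite, mul_one, mul_zero]
  rw [Finset.sum_ite_eq (Finset.range (k+1)) i]
  simp [Nat.lt_succ_iff]

lemma lagP_zero (γ : ℝ) (hγ : 0 ≤ γ) : lagP 0 γ = 1 := by
  have h : Real.Gamma (γ + 1) ≠ 0 := (Real.Gamma_pos_of_pos (by linarith)).ne'
  simp [lagP]
  rw [div_self]
  · simp
  · simpa using h

noncomputable def dd (γ : ℝ) : ℕ → Polynomial ℝ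
  | 0 => 1
  | (j+1) => lagP (j+1) γ - lagP j γ

noncomputable def E (γ : ℝ) (j i : ℕ) : ℝ :=
  (-1)^i * (γ + i) * Real.Gamma ((j:ℝ) + γ) /
    ((Nat.factorial i) * (Nat.factorial (j - i)) * Real.Gamma ((i:ℝ) + γ + 1))

lemma dd_coeff (γ : ℝ) (hγ : 0 ≤ γ) (j i : ℕ) :
    (dd γ (j+1)).coeff i = if i ≤ j+1 then E γ (j+1) i else 0 := by
  have hJpos : (0:ℝ) < (j:ℝ) + 1 + γ := by positivity
  have hJ : Real.Gamma ((j:ℝ) + 1 + γ + 1) = ((j:ℝ) + 1 + γ) * Real.Gamma ((j:ℝ) + 1 + γ) :=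
    Real.Gamma_add_one hJpos.ne'
  show (lagP (j+1) γ - lagP j γ).coeff i = _
  rw [Polynomial.coeff_sub, lagP_coeff, lagP_coeff]
  rcases Nat.lt_or_ge i (j+1) with h | h
  · -- i ≤ j
    have hij : i ≤ j := Nat.lt_succ_iff.mp h
    rw [if_pos hij, if_pos (le_trans hij (Nat.le_succ j)), if_pos (le_trans hij (Nat.le_succ j))]
    unfold E
    have hsub : j + 1 - i = (j - i) + 1 := by omega
    rw [hsub]
    have hGi : (0:ℝ) < Real.Gamma ((i:ℝ) + γ + 1) := Real.Gamma_pos_of_pos (by positivity)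
    have hfac1 : ((Nat.factorial (j - i + 1)) : ℝ) = ((j:ℝ) - i + 1) * (Nat.factorial (j - i)) := by
      rw [Nat.factorial_succ]
      push_cast [Nat.cast_sub hij]
      ring
    have hcast : ((j:ℝ) + 1) + γ + 1 = (j:ℝ) + 1 + γ + 1 := by ring
    push_cast
    rw [hJ, hfac1]
    have hfi : (0:ℝ) < (Nat.factorial i : ℝ) := by exact_mod_cast Nat.factorial_pos i
    have hfji : (0:ℝ) < (Nat.factorial (j-i) : ℝ) := by exact_mod_cast Nat.factorial_pos (j-i)
    have hji1 : (0:ℝ) < (j:ℝ) - i + 1 := by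
      have : (i:ℝ) ≤ j := by exact_mod_cast hij
      linarith
    field_simp
    ring
  · rcases Nat.eq_or_lt_of_le h with h' | h'
    · -- i = j+1
      subst h'
      rw [if_pos (le_refl _), if_neg (by omega), if_pos (le_refl _)]
      unfold E
      have hGJ1 : (0:ℝ) < Real.Gamma ((j:ℝ) + 1 + γ + 1) := Real.Gamma_pos_of_pos (by positivity)
      simp only [Nat.sub_self, Nat.factorial_zero]
      push_cast
      rw [hJ, sub_zero]
      field_simp
      ring
    · rw [if_neg (by omega), if_neg (by omega), if_neg (by omega)]
      simp

noncomputable def Lap (γ : ℝ) (q : Polynomial ℝ) : Polynomial ℝ :=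
  C 4 * X * (derivative (derivative q) - C 2 * derivative q + q) + C (4*γ) * (derivative q - q)

lemma Lap_coeff_zero (γ : ℝ) (q : Polynomial ℝ) :
    (Lap γ q).coeff 0 = 4*γ*(q.coeff 1 - q.coeff 0) := by
  simp [Lap, Polynomial.mul_coeff_zero, Polynomial.coeff_derivative]

lemma Lap_coeff_succ (γ : ℝ) (q : Polynomial ℝ) (i : ℕ) :
    (Lap γ q).coeff (i+1) =
      4*(((i:ℝ)+1)*((i:ℝ)+2)*q.coeff (i+2) - 2*((i:ℝ)+1)*q.coeff (i+1) + q.coeff i)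
      + 4*γ*(((i:ℝ)+2)*q.coeff (i+2) - q.coeff (i+1)) := by
  have h : (C (4:ℝ) * X * (derivative (derivative q) - C 2 * derivative q + q)).coeff (i+1)
      = 4 * ((derivative (derivative q) - C 2 * derivative q + q).coeff i) := by
    rw [mul_assoc, Polynomial.coeff_C_mul, Polynomial.coeff_X_mul]
  simp only [Lap, Polynomial.coeff_add, h, Polynomial.coeff_sub, Polynomial.coeff_C_mul,
    Polynomial.coeff_derivative]
  push_cast
  ring



lemma real_main (γ x y B N F1 F2 s : ℝ) (hB : B ≠ 0) (hF1 : F1 ≠ 0) (hF2 : F2 ≠ 0)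
    (hx1 : x + γ + 1 ≠ 0) (hx2 : x + 1 + γ + 1 ≠ 0) (hi1 : x + 1 ≠ 0) (hi2 : x + 1 + 1 ≠ 0)
    (hk1 : y + 1 ≠ 0) (hk2 : y + 1 + 1 ≠ 0) :
    4 * ((x + 1) * (x + 2) *
              (s * -1 * -1 * (γ + (x + 2)) * N /
                ((x + 1 + 1) * ((x + 1) * F1) * F2 * ((x + 1 + γ + 1) * ((x + γ + 1) * B)))) -
            2 * (x + 1) * (s * -1 * (γ + (x + 1)) * N / ((x + 1) * F1 * ((y + 1) * F2) * ((x + γ + 1) * B))) +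
          s * (γ + x) * N / (F1 * ((y + 1 + 1) * ((y + 1) * F2)) * B)) +
      4 * γ *
        ((x + 2) *
            (s * -1 * -1 * (γ + (x + 2)) * N /
              ((x + 1 + 1) * ((x + 1) * F1) * F2 * ((x + 1 + γ + 1) * ((x + γ + 1) * B)))) -
          s * -1 * (γ + (x + 1)) * N / ((x + 1) * F1 * ((y + 1) * F2) * ((x + γ + 1) * B))) =
    -4 * (x + 1 + y + 1 + 1) *
      (s * -1 * (γ + (x + 1)) * ((x + 1 + y + 1 + γ) * N) /
        ((x + 1) * F1 * ((y + 1 + 1) * ((y + 1) * F2)) * ((x + γ + 1) * B))) := by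
  field_simp
  ring

lemma Ecalc_main (γ : ℝ) (hγ : 0 ≤ γ) (i k : ℕ) :
    4*(((i:ℝ)+1)*((i:ℝ)+2)*E γ (i+1+k+1) (i+2) - 2*((i:ℝ)+1)*E γ (i+1+k+1) (i+1) + E γ (i+1+k+1) i)
      + 4*γ*(((i:ℝ)+2)*E γ (i+1+k+1) (i+2) - E γ (i+1+k+1) (i+1))
    = -4*((i:ℝ)+1+(k:ℝ)+1+1)*E γ (i+1+k+1+1) (i+1) := by
  unfold E
  simp only [show i+1+k+1 - (i+2) = k from by omega, show i+1+k+1 - (i+1) = k+1 from by omega,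
    show i+1+k+1 - i = k+2 from by omega, show i+1+k+1+1 - (i+1) = k+2 from by omega,
    Nat.factorial_succ]
  push_cast
  have h1 : Real.Gamma ((i:ℝ) + 1 + γ + 1) = ((i:ℝ) + γ + 1) * Real.Gamma ((i:ℝ) + γ + 1) := by
    rw [show (i:ℝ) + 1 + γ + 1 = ((i:ℝ) + γ + 1) + 1 by ring,
      Real.Gamma_add_one (by positivity)]
  have h2 : Real.Gamma ((i:ℝ) + 2 + γ + 1) = ((i:ℝ) + 1 + γ + 1) * (((i:ℝ) + γ + 1) * Real.Gamma ((i:ℝ) + γ + 1)) := by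
    rw [show (i:ℝ) + 2 + γ + 1 = ((i:ℝ) + 1 + γ + 1) + 1 by ring,
      Real.Gamma_add_one (by positivity), h1]
  have h3 : Real.Gamma ((i:ℝ) + 1 + (k:ℝ) + 1 + 1 + γ) = ((i:ℝ) + 1 + (k:ℝ) + 1 + γ) * Real.Gamma ((i:ℝ) + 1 + (k:ℝ) + 1 + γ) := by
    rw [show (i:ℝ) + 1 + (k:ℝ) + 1 + 1 + γ = ((i:ℝ) + 1 + (k:ℝ) + 1 + γ) + 1 by ring,
      Real.Gamma_add_one (by positivity)]
  rw [h1, h2, h3]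
  have hBpos : 0 < Real.Gamma ((i:ℝ) + γ + 1) := Real.Gamma_pos_of_pos (by positivity)
  have hfi : (0:ℝ) < (Nat.factorial i : ℝ) := by exact_mod_cast Nat.factorial_pos i
  have hfk : (0:ℝ) < (Nat.factorial k : ℝ) := by exact_mod_cast Nat.factorial_pos k
  simp only [pow_succ]
  generalize Real.Gamma ((i:ℝ) + γ + 1) = B at hBpos ⊢
  generalize Real.Gamma ((i:ℝ) + 1 + (k:ℝ) + 1 + γ) = N
  generalize ((Nat.factorial i : ℝ)) = F1 at hfi ⊢
  generalize ((Nat.factorial k : ℝ)) = F2 at hfk ⊢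
  generalize ((-1 : ℝ))^i = s
  have hB : B ≠ 0 := hBpos.ne'
  have hF1 : F1 ≠ 0 := hfi.ne'
  have hF2 : F2 ≠ 0 := hfk.ne'
  have hx1 : ((i:ℝ) + γ + 1) ≠ 0 := by positivity
  have hx2 : ((i:ℝ) + 1 + γ + 1) ≠ 0 := by positivity
  have hi1 : ((i:ℝ) + 1) ≠ 0 := by positivity
  have hi2 : ((i:ℝ) + 1 + 1) ≠ 0 := by positivity
  have hk1 : ((k:ℝ) + 1) ≠ 0 := by positivity
  have hk2 : ((k:ℝ) + 1 + 1) ≠ 0 := by positivity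
  exact real_main γ (i:ℝ) (k:ℝ) B N F1 F2 s hB hF1 hF2 hx1 hx2 hi1 hi2 hk1 hk2

lemma Ecalc_zero (γ : ℝ) (hγ : 0 ≤ γ) (J : ℕ) :
    4*γ*(E γ (J+1) 1 - E γ (J+1) 0) = -4*((J:ℝ)+1+1)*E γ (J+1+1) 0 := by
  unfold E
  simp only [show J+1-1 = J from by omega, show J+1-0 = J+1 from by omega,
    show J+1+1-0 = J+2 from by omega, Nat.factorial_succ, Nat.factorial_one, Nat.factorial_zero]
  push_cast
  have h1 : Real.Gamma ((1:ℝ) + γ + 1) = (γ + 1) * Real.Gamma (γ + 1) := by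
    rw [show (1:ℝ) + γ + 1 = (γ + 1) + 1 by ring, Real.Gamma_add_one (by positivity)]
  have h2 : Real.Gamma ((J:ℝ) + 1 + 1 + γ) = ((J:ℝ) + 1 + γ) * Real.Gamma ((J:ℝ) + 1 + γ) := by
    rw [show (J:ℝ) + 1 + 1 + γ = ((J:ℝ) + 1 + γ) + 1 by ring, Real.Gamma_add_one (by positivity)]
  have h0 : Real.Gamma ((0:ℝ) + γ + 1) = Real.Gamma (γ + 1) := by norm_num
  rw [h1, h2, h0]
  have hB : Real.Gamma (γ + 1) ≠ 0 := (Real.Gamma_pos_of_pos (by positivity)).ne'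
  have hF : ((Nat.factorial J : ℝ)) ≠ 0 := by exact_mod_cast (Nat.factorial_pos J).ne'
  have hJ1 : ((J:ℝ) + 1) ≠ 0 := by positivity
  have hJ2 : ((J:ℝ) + 1 + 1) ≠ 0 := by positivity
  have hg1 : (γ + 1) ≠ 0 := by positivity
  field_simp
  ring

lemma Ecalc_diag (γ : ℝ) (hγ : 0 ≤ γ) (i : ℕ) :
    4*(-(2*((i:ℝ)+1))*E γ (i+1) (i+1) + E γ (i+1) i) - 4*γ*E γ (i+1) (i+1)
      = -4*((i:ℝ)+1+1)*E γ (i+1+1) (i+1) := by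
  unfold E
  simp only [show i+1-(i+1) = 0 from by omega, show i+1-i = 1 from by omega,
    show i+1+1-(i+1) = 1 from by omega, Nat.factorial_succ, Nat.factorial_one, Nat.factorial_zero]
  push_cast
  have e1 : Real.Gamma ((i:ℝ) + 1 + γ) = Real.Gamma ((i:ℝ) + γ + 1) := by ring_nf
  have h1 : Real.Gamma ((i:ℝ) + 1 + γ + 1) = ((i:ℝ) + γ + 1) * Real.Gamma ((i:ℝ) + γ + 1) := by
    rw [show (i:ℝ) + 1 + γ + 1 = ((i:ℝ) + γ + 1) + 1 by ring, Real.Gamma_add_one (by positivity)]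
  have h2 : Real.Gamma ((i:ℝ) + 1 + 1 + γ) = ((i:ℝ) + γ + 1) * Real.Gamma ((i:ℝ) + γ + 1) := by
    rw [show (i:ℝ) + 1 + 1 + γ = ((i:ℝ) + γ + 1) + 1 by ring, Real.Gamma_add_one (by positivity)]
  rw [e1, h1, h2]
  have hB : Real.Gamma ((i:ℝ) + γ + 1) ≠ 0 := (Real.Gamma_pos_of_pos (by positivity)).ne'
  have hF : ((Nat.factorial i : ℝ)) ≠ 0 := by exact_mod_cast (Nat.factorial_pos i).ne'
  have hi1 : ((i:ℝ) + 1) ≠ 0 := by positivity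
  have hg1 : ((i:ℝ) + γ + 1) ≠ 0 := by positivity
  simp only [pow_succ]
  field_simp
  ring

lemma Ecalc_top (γ : ℝ) (hγ : 0 ≤ γ) (J : ℕ) :
    4*E γ (J+1) (J+1) = -4*((J:ℝ)+1+1)*E γ (J+1+1) (J+1+1) := by
  unfold E
  simp only [show J+1-(J+1) = 0 from by omega, show J+1+1-(J+1+1) = 0 from by omega,
    Nat.factorial_succ, Nat.factorial_zero]
  push_cast
  have h1 : Real.Gamma ((J:ℝ) + 1 + γ + 1) = ((J:ℝ) + 1 + γ) * Real.Gamma ((J:ℝ) + 1 + γ) := by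
    rw [show (J:ℝ) + 1 + γ + 1 = ((J:ℝ) + 1 + γ) + 1 by ring, Real.Gamma_add_one (by positivity)]
  have h2 : Real.Gamma ((J:ℝ) + 1 + 1 + γ) = ((J:ℝ) + 1 + γ) * Real.Gamma ((J:ℝ) + 1 + γ) := by
    rw [show (J:ℝ) + 1 + 1 + γ = ((J:ℝ) + 1 + γ) + 1 by ring, Real.Gamma_add_one (by positivity)]
  have h3 : Real.Gamma ((J:ℝ) + 1 + 1 + γ + 1) = ((J:ℝ) + 1 + 1 + γ) * (((J:ℝ) + 1 + γ) * Real.Gamma ((J:ℝ) + 1 + γ)) := by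
    rw [show (J:ℝ) + 1 + 1 + γ + 1 = ((J:ℝ) + 1 + 1 + γ) + 1 by ring, Real.Gamma_add_one (by positivity), h2]
  rw [h1, h2, h3]
  have hB : Real.Gamma ((J:ℝ) + 1 + γ) ≠ 0 := (Real.Gamma_pos_of_pos (by positivity)).ne'
  have hF : ((Nat.factorial J : ℝ)) ≠ 0 := by exact_mod_cast (Nat.factorial_pos J).ne'
  have hJ1 : ((J:ℝ) + 1) ≠ 0 := by positivity
  have hJ2 : ((J:ℝ) + 1 + 1) ≠ 0 := by positivity
  have hg1 : ((J:ℝ) + 1 + γ) ≠ 0 := by positivity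
  have hg2 : ((J:ℝ) + 1 + 1 + γ) ≠ 0 := by positivity
  simp only [pow_succ]
  field_simp
  ring

lemma E_one_zero (γ : ℝ) (hγ : 0 ≤ γ) : E γ 1 0 = γ := by
  unfold E
  norm_num
  rw [show (1:ℝ) + γ = γ + 1 by ring]
  rw [mul_div_assoc, div_self (Real.Gamma_pos_of_pos (by positivity : (0:ℝ) < γ + 1)).ne', mul_one]

lemma E_one_one (γ : ℝ) (hγ : 0 ≤ γ) : E γ 1 1 = -1 := by
  unfold E
  norm_num
  have hg1 : (γ + 1) ≠ 0 := by positivity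
  rw [show (1:ℝ) + γ + 1 = (γ + 1) + 1 by ring, show (1:ℝ) + γ = γ + 1 by ring,
    Real.Gamma_add_one hg1]
  have hB : Real.Gamma (γ + 1) ≠ 0 := (Real.Gamma_pos_of_pos (by positivity)).ne'
  field_simp
  ring


lemma Lap_dd (γ : ℝ) (hγ : 0 ≤ γ) (j : ℕ) :
    Lap γ (dd γ j) = C (-4*((j:ℝ)+1)) * dd γ (j+1) := by
  ext m
  rw [Polynomial.coeff_C_mul]
  cases j with
  | zero =>
    show (Lap γ 1).coeff m = -4*(((0:ℕ):ℝ)+1) * (dd γ (0+1)).coeff m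
    rw [dd_coeff γ hγ 0 m]
    match m with
    | 0 =>
      rw [Lap_coeff_zero, if_pos (by omega), E_one_zero γ hγ]
      simp [Polynomial.coeff_one]
    | 1 =>
      rw [Lap_coeff_succ γ _ 0, if_pos (by omega), E_one_one γ hγ]
      simp [Polynomial.coeff_one]
    | (mm+2) =>
      rw [Lap_coeff_succ γ _ (mm+1), if_neg (by omega)]
      simp [Polynomial.coeff_one]
  | succ J =>
    have hc := dd_coeff γ hγ J
    show (Lap γ (dd γ (J+1))).coeff m = -4*(((J+1:ℕ):ℝ)+1) * (dd γ (J+1+1)).coeff m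
    rw [dd_coeff γ hγ (J+1) m]
    match m with
    | 0 =>
      rw [Lap_coeff_zero, hc 1, hc 0, if_pos (by omega), if_pos (by omega), if_pos (by omega)]
      push_cast
      linear_combination Ecalc_zero γ hγ J
    | (i+1) =>
      rw [Lap_coeff_succ γ _ i, hc (i+2), hc (i+1), hc i]
      by_cases h2 : i + 2 ≤ J + 1
      · obtain ⟨k, hk⟩ : ∃ k, J = i + 1 + k := ⟨J - i - 1, by omega⟩
        subst hk
        rw [if_pos (by omega), if_pos (by omega), if_pos (by omega), if_pos (by omega)]
        push_cast
        linear_combination Ecalc_main γ hγ i k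
      · by_cases h1 : i + 1 ≤ J + 1
        · have hiJ : i = J := by omega
          subst hiJ
          rw [if_neg (by omega), if_pos (by omega), if_pos (by omega), if_pos (by omega)]
          push_cast
          linear_combination Ecalc_diag γ hγ i
        · by_cases h0 : i ≤ J + 1
          · have hiJ : i = J + 1 := by omega
            subst hiJ
            rw [if_neg (by omega), if_neg (by omega), if_pos (by omega), if_pos (by omega)]
            push_cast
            linear_combination Ecalc_top γ hγ J
          · rw [if_neg (by omega), if_neg (by omega), if_neg (by omega), if_neg (by omega)]
            ring



lemma Lap_C_mul (γ c : ℝ) (q : Polynomial ℝ) : Lap γ (C c * q) = C c * Lap γ q := by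
  simp only [Lap, derivative_C_mul]
  ring

lemma hasDerivAt_polyGauss (q : Polynomial ℝ) (r : ℝ) :
    HasDerivAt (fun s => q.eval s * Real.exp (-s))
      ((derivative q - q).eval r * Real.exp (-r)) r := by
  have h1 := q.hasDerivAt r
  have h2 : HasDerivAt (fun s : ℝ => Real.exp (-s)) (-Real.exp (-r)) r := by
    simpa [Function.comp_def] using (Real.hasDerivAt_exp (-r)).comp r (hasDerivAt_neg r)
  have h3 : HasDerivAt (fun s => q.eval s * Real.exp (-s)) _ r := h1.mul h2
  convert h3 using 1
  simp only [Polynomial.eval_sub]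
  ring

lemma norm_add_smul_single (n : ℕ) (x : EuclideanSpace ℝ (Fin n)) (i : Fin n) (t : ℝ) :
    ‖x + t • EuclideanSpace.single i (1:ℝ)‖^2 = ‖x‖^2 + 2*(x i)*t + t^2 := by
  rw [norm_add_sq_real]
  have h1 : (inner ℝ x (t • EuclideanSpace.single i (1:ℝ)) : ℝ) = t * (x i) := by
    rw [real_inner_smul_right, EuclideanSpace.inner_single_right]
    simp
  have h2 : ‖t • EuclideanSpace.single i (1:ℝ)‖^2 = t^2 := by
    rw [norm_smul, EuclideanSpace.norm_single]
    simp [mul_pow, sq_abs]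
  rw [h1, h2]
  ring

lemma sliceDeriv (q : Polynomial ℝ) {n : ℕ} (x : EuclideanSpace ℝ (Fin n)) (i : Fin n) :
    iteratedDeriv 2 (fun t : ℝ => q.eval (‖x + t • EuclideanSpace.single i (1:ℝ)‖^2)
        * Real.exp (-‖x + t • EuclideanSpace.single i (1:ℝ)‖^2)) 0
    = (4*(x i)^2 * ((derivative (derivative q - q) - (derivative q - q)).eval (‖x‖^2))
        + 2 * ((derivative q - q).eval (‖x‖^2))) * Real.exp (-‖x‖^2) := by
  have hfun : (fun t : ℝ => q.eval (‖x + t • EuclideanSpace.single i (1:ℝ)‖^2)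
        * Real.exp (-‖x + t • EuclideanSpace.single i (1:ℝ)‖^2))
      = (fun t : ℝ => q.eval (‖x‖^2 + 2*(x i)*t + t^2)
          * Real.exp (-(‖x‖^2 + 2*(x i)*t + t^2))) := by
    funext t
    rw [norm_add_smul_single]
  rw [hfun]
  have hu : ∀ t : ℝ, HasDerivAt (fun t : ℝ => ‖x‖^2 + 2*(x i)*t + t^2) (2*(x i) + 2*t) t := by
    intro t
    have h := (((hasDerivAt_id t).const_mul (2*(x i))).const_add (‖x‖^2)).add (hasDerivAt_pow 2 t)
    simpa [Pi.add_def] using h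
  have hg : ∀ t : ℝ, HasDerivAt (fun t : ℝ => q.eval (‖x‖^2 + 2*(x i)*t + t^2)
        * Real.exp (-(‖x‖^2 + 2*(x i)*t + t^2)))
      ((derivative q - q).eval (‖x‖^2 + 2*(x i)*t + t^2)
        * Real.exp (-(‖x‖^2 + 2*(x i)*t + t^2)) * (2*(x i) + 2*t)) t :=
    fun t => (hasDerivAt_polyGauss q _).comp t (hu t)
  rw [iteratedDeriv_succ, iteratedDeriv_one]
  have hder : deriv (fun t : ℝ => q.eval (‖x‖^2 + 2*(x i)*t + t^2)
        * Real.exp (-(‖x‖^2 + 2*(x i)*t + t^2)))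
      = fun t : ℝ => (derivative q - q).eval (‖x‖^2 + 2*(x i)*t + t^2)
        * Real.exp (-(‖x‖^2 + 2*(x i)*t + t^2)) * (2*(x i) + 2*t) :=
    funext fun t => (hg t).deriv
  rw [hder]
  have hA : HasDerivAt (fun t : ℝ => (derivative q - q).eval (‖x‖^2 + 2*(x i)*t + t^2)
        * Real.exp (-(‖x‖^2 + 2*(x i)*t + t^2)))
      ((derivative (derivative q - q) - (derivative q - q)).eval (‖x‖^2 + 2*(x i)*0 + 0^2)
        * Real.exp (-(‖x‖^2 + 2*(x i)*0 + 0^2)) * (2*(x i) + 2*0)) 0 :=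
    (hasDerivAt_polyGauss (derivative q - q) _).comp 0 (hu 0)
  have hB : HasDerivAt (fun t : ℝ => 2*(x i) + 2*t) 2 0 := by
    have h := ((hasDerivAt_id (0:ℝ)).const_mul (2:ℝ)).const_add (2*(x i))
    simpa using h
  have hC := hA.mul hB
  erw [hC.deriv]
  norm_num
  ring


lemma euclid_sum_sq {n : ℕ} (x : EuclideanSpace ℝ (Fin n)) : ∑ i : Fin n, (x i)^2 = ‖x‖^2 := by
  rw [EuclideanSpace.norm_eq, Real.sq_sqrt (by positivity)]
  simp [sq_abs]

lemma laplacian_polyGauss (n : ℕ) (q : Polynomial ℝ) (x : EuclideanSpace ℝ (Fin n)) :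
    laplacian n (fun y => q.eval (‖y‖^2) * Real.exp (-‖y‖^2)) x
      = (Lap ((n:ℝ)/2) q).eval (‖x‖^2) * Real.exp (-‖x‖^2) := by
  unfold laplacian
  rw [Finset.sum_congr rfl (fun i _ => sliceDeriv q x i)]
  have h1 : ∑ i : Fin n, (4*(x i)^2 * ((derivative (derivative q - q) - (derivative q - q)).eval (‖x‖^2))
        + 2 * ((derivative q - q).eval (‖x‖^2))) * Real.exp (-‖x‖^2)
      = (4*(∑ i : Fin n, (x i)^2) * ((derivative (derivative q - q) - (derivative q - q)).eval (‖x‖^2))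
        + 2*(n:ℝ) * ((derivative q - q).eval (‖x‖^2))) * Real.exp (-‖x‖^2) := by
    set A := (derivative (derivative q - q) - (derivative q - q)).eval (‖x‖^2) with hA
    set B := (derivative q - q).eval (‖x‖^2) with hB
    set e := Real.exp (-‖x‖^2) with he
    have hterm : ∀ i : Fin n, (4*(x i)^2 * A + 2*B)*e = (x i)^2 * (4*A*e) + 2*B*e :=
      fun i => by ring
    rw [Finset.sum_congr rfl fun i _ => hterm i, Finset.sum_add_distrib, ← Finset.sum_mul,
      Finset.sum_const, Finset.card_univ, Fintype.card_fin, nsmul_eq_mul]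
    ring
  rw [h1, euclid_sum_sq]
  simp only [Lap, Polynomial.eval_add, Polynomial.eval_mul, Polynomial.eval_sub,
    Polynomial.eval_C, Polynomial.eval_X, Polynomial.derivative_sub]
  ring

lemma iterate_laplacian_polyGauss (n : ℕ) (j : ℕ) (q : Polynomial ℝ) :
    (laplacian n)^[j] (fun y => q.eval (‖y‖^2) * Real.exp (-‖y‖^2))
      = fun y => ((Lap ((n:ℝ)/2))^[j] q).eval (‖y‖^2) * Real.exp (-‖y‖^2) := by
  induction j with
  | zero => simp
  | succ j ih =>
    rw [Function.iterate_succ_apply', ih]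
    funext y
    rw [laplacian_polyGauss n _ y, Function.iterate_succ_apply']

lemma Lap_iter_one (γ : ℝ) (hγ : 0 ≤ γ) (j : ℕ) :
    (Lap γ)^[j] 1 = C ((-4:ℝ)^j * (Nat.factorial j : ℝ)) * dd γ j := by
  induction j with
  | zero => simp [dd]
  | succ j ih =>
    rw [Function.iterate_succ_apply', ih, Lap_C_mul, Lap_dd γ hγ j, ← mul_assoc, ← Polynomial.C_mul]
    congr 2
    push_cast [Nat.factorial_succ]
    ring

lemma dd_sum (γ : ℝ) (hγ : 0 ≤ γ) (M : ℕ) :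
    ∑ j ∈ Finset.range (M+1), dd γ j = lagP M γ := by
  induction M with
  | zero =>
    rw [Finset.sum_range_one]
    show (1 : Polynomial ℝ) = _
    rw [lagP_zero γ hγ]
  | succ M ih =>
    rw [Finset.sum_range_succ, ih]
    show lagP M γ + (lagP (M+1) γ - lagP M γ) = lagP (M+1) γ
    ring

/-- For `M ≥ 1`,
`L_{M-1}^{(n/2)}(|x|²) e^{-|x|²} = ∑_{j=0}^{M-1} ((-1)^j/(j! 4^j)) Δ^j e^{-|x|²}`. -/
theorem laguerre_gaussian_laplacian_expansion (n M : ℕ) (hM : 1 ≤ M)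
    (x : EuclideanSpace ℝ (Fin n)) :
    genLaguerre (M - 1) ((n : ℝ) / 2) (‖x‖ ^ 2) * Real.exp (-‖x‖ ^ 2) =
      ∑ j ∈ Finset.range M, ((-1 : ℝ) ^ j / (Nat.factorial j * 4 ^ j)) *
        ((laplacian n)^[j] (fun y => Real.exp (-‖y‖ ^ 2)) x) := by
  have hγ : 0 ≤ (n:ℝ)/2 := by positivity
  have hgauss : (fun y : EuclideanSpace ℝ (Fin n) => Real.exp (-‖y‖^2))
      = (fun y : EuclideanSpace ℝ (Fin n) => (1:Polynomial ℝ).eval (‖y‖^2) * Real.exp (-‖y‖^2)) := by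
    funext y; simp
  rw [hgauss]
  have hterm : ∀ j ∈ Finset.range M, ((-1:ℝ)^j / (Nat.factorial j * 4^j)) *
        ((laplacian n)^[j] (fun y : EuclideanSpace ℝ (Fin n) =>
          (1:Polynomial ℝ).eval (‖y‖^2) * Real.exp (-‖y‖^2)) x)
      = (dd ((n:ℝ)/2) j).eval (‖x‖^2) * Real.exp (-‖x‖^2) := by
    intro j _
    rw [iterate_laplacian_polyGauss n j 1, Lap_iter_one ((n:ℝ)/2) hγ j]
    simp only [Polynomial.eval_mul, Polynomial.eval_C]
    have hneg : ((-1:ℝ)^j) * (-1:ℝ)^j = 1 := by rw [← mul_pow]; norm_num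
    have h4 : ((-4:ℝ))^j = (-1)^j * 4^j := by
      rw [show (-4:ℝ) = -1*4 by norm_num, mul_pow]
    have hd : ((Nat.factorial j : ℝ) * 4^j) ≠ 0 := by
      have : (0:ℝ) < (Nat.factorial j : ℝ) := by exact_mod_cast Nat.factorial_pos j
      positivity
    calc ((-1:ℝ)^j / (Nat.factorial j * 4^j)) *
          ((-4:ℝ)^j * (Nat.factorial j : ℝ) * (dd ((n:ℝ)/2) j).eval (‖x‖^2) * Real.exp (-‖x‖^2))
        = (((-1:ℝ)^j) * ((-1:ℝ)^j)) * (((Nat.factorial j : ℝ) * 4^j) / ((Nat.factorial j : ℝ) * 4^j))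
            * ((dd ((n:ℝ)/2) j).eval (‖x‖^2) * Real.exp (-‖x‖^2)) := by
          rw [h4]; ring
      _ = (dd ((n:ℝ)/2) j).eval (‖x‖^2) * Real.exp (-‖x‖^2) := by
          rw [hneg, div_self hd, one_mul, one_mul]
  rw [Finset.sum_congr rfl hterm, ← Finset.sum_mul, ← Polynomial.eval_finset_sum]
  obtain ⟨M', rfl⟩ : ∃ M', M = M' + 1 := ⟨M - 1, by omega⟩
  rw [dd_sum ((n:ℝ)/2) hγ M', Nat.add_sub_cancel, lagP_eval]
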